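/- arXiv:2303.10638 — 3 statements merged into one kernel-verified Lean document; each statement's English description precedes it below -/
import Mathlib

section
/- Let θ ∈ NHol(G) satisfy 1^θ = 1, and suppose η ∈ Aut(G/G') and τ ∈ Aut(G') satisfy (xG')^η = x^θ G' for all x ∈ G and z^τ = z^θ for all z ∈ G'. Then the pair (η, τ) belongs to Norm(Γ(G)), the normalizer of Γ(G) in Aut(G/G') × Aut(G'). -/
section Holomorph

variable (G : Type*) [Group G]

/-- The image of the right regular representation `ρ : G → Sym(G)`, `x^{ρ(y)} = x*y`,
as a subgroup of the permutation group of `G`. -/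
def rhoSubgroup : Subgroup (Equiv.Perm G) where
  carrier := {f | ∃ y : G, f = Equiv.mulRight y}
  one_mem' := ⟨1, Equiv.ext fun x => by simp⟩
  mul_mem' := by
    rintro f g ⟨a, rfl⟩ ⟨b, rfl⟩
    exact ⟨b * a, Equiv.ext fun x => by simp [mul_assoc]⟩
  inv_mem' := by
    rintro f ⟨a, rfl⟩
    exact ⟨a⁻¹, Equiv.ext fun x => by simp⟩

/-- The holomorph of `G`: the normalizer of `ρ(G)` in `Sym(G)`. -/
def Hol : Subgroup (Equiv.Perm G) := Subgroup.normalizer (rhoSubgroup G : Set (Equiv.Perm G))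

/-- The multiple holomorph of `G`: the normalizer of `Hol(G)` in `Sym(G)`. -/
def NHol : Subgroup (Equiv.Perm G) := Subgroup.normalizer (Hol G : Set (Equiv.Perm G))

instance : ((Hol G).subgroupOf (NHol G)).Normal := Subgroup.normal_in_normalizer

/-- `T(G) = NHol(G)/Hol(G)`. -/
abbrev TG := NHol G ⧸ (Hol G).subgroupOf (NHol G)


end Holomorph

section ClassTwo

variable (G : Type*) [Group G]

/-- `Γ(G)`: the image of the natural homomorphism
`Aut(G) → Aut(G/G') × Aut(G')` induced by restrictions, realized as the subgroup of pairs
`(η, τ)` that are simultaneously induced by a single automorphism `β` of `G`. -/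
def GammaG : Subgroup (MulAut (G ⧸ commutator G) × MulAut (commutator G)) where
  carrier := {q | ∃ β : MulAut G,
    (∀ x : G, q.1 (x : G ⧸ commutator G) = ((β x : G) : G ⧸ commutator G)) ∧
    (∀ z : commutator G, ((q.2 z : commutator G) : G) = β (z : G))}
  one_mem' := ⟨1, fun x => rfl, fun z => rfl⟩
  mul_mem' := by
    rintro a b ⟨β₁, h1q, h1z⟩ ⟨β₂, h2q, h2z⟩
    refine ⟨β₁ * β₂, fun x => ?_, fun z => ?_⟩
    · have : (a.1 * b.1) (x : G ⧸ commutator G) = a.1 (b.1 (x : G ⧸ commutator G)) := rfl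
      rw [Prod.fst_mul, this, h2q x, h1q (β₂ x)]
      rfl
    · have : (a.2 * b.2) z = a.2 (b.2 z) := rfl
      rw [Prod.snd_mul, this, h1z (b.2 z), h2z z]
      rfl
  inv_mem' := by
    rintro a ⟨β, hq, hz⟩
    refine ⟨β⁻¹, fun x => ?_, fun z => ?_⟩
    · have h1 : a.1 ((β⁻¹ x : G) : G ⧸ commutator G) = ((β (β⁻¹ x) : G) : G ⧸ commutator G) :=
        hq (β⁻¹ x)
      have h2 : β (β⁻¹ x) = x := by
        simp
      rw [h2] at h1
      rw [Prod.fst_inv, MulAut.inv_def, MulEquiv.symm_apply_eq]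
      rw [MulAut.inv_def]
      exact h1.symm
    · have h1 : ((a.2 (a.2⁻¹ z) : commutator G) : G) = β ((a.2⁻¹ z : commutator G) : G) :=
        hz (a.2⁻¹ z)
      have h2 : a.2 (a.2⁻¹ z) = z := by simp
      rw [h2] at h1
      rw [Prod.snd_inv, MulAut.inv_def, eq_comm, MulAut.inv_def, MulEquiv.symm_apply_eq]
      rw [MulAut.inv_def] at h1
      exact h1

end ClassTwo

section Aux

theorem Equiv.Perm.apply_inv_self {α : Type*} (f : Equiv.Perm α) (x : α) : f (f⁻¹ x) = x :=
  f.apply_symm_apply x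

@[simp]
theorem Equiv.Perm.inv_apply_self {α : Type*} (f : Equiv.Perm α) (x : α) : f⁻¹ (f x) = x :=
  f.symm_apply_apply x

variable {G : Type*} [Group G]

lemma mulRight_conj_toPerm (β : MulAut G) (y : G) :
    MulAut.toPerm G β * Equiv.mulRight y * (MulAut.toPerm G β)⁻¹ = Equiv.mulRight (β y) := by
  ext x
  have h : ((MulAut.toPerm G) β)⁻¹ x = β⁻¹ x := by rw [← map_inv]; rfl
  simp only [Equiv.Perm.mul_apply, Equiv.coe_mulRight, h]
  show β (β⁻¹ x * y) = x * β y
  rw [map_mul, MulAut.apply_inv_self]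

lemma toPerm_mem_Hol (β : MulAut G) : MulAut.toPerm G β ∈ Hol G := by
  rw [Hol, Subgroup.mem_normalizer_iff]
  intro r
  constructor
  · rintro ⟨y, rfl⟩
    exact ⟨β y, mulRight_conj_toPerm β y⟩
  · rintro ⟨a, ha⟩
    refine ⟨β⁻¹ a, ?_⟩
    have h1 : r = (MulAut.toPerm G β)⁻¹ * Equiv.mulRight a * MulAut.toPerm G β := by
      rw [← ha]; group
    have h2 : (MulAut.toPerm G β)⁻¹ = MulAut.toPerm G β⁻¹ := by
      rw [← map_inv]
    rw [h1, h2]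
    have := mulRight_conj_toPerm β⁻¹ a
    rw [← map_inv, inv_inv] at this
    rw [← this]

lemma hol_fix_one_mul {f : Equiv.Perm G} (hf : f ∈ Hol G) (h1 : f 1 = 1) (a b : G) :
    f (a * b) = f a * f b := by
  obtain ⟨c, hc⟩ := (Subgroup.mem_normalizer_iff.mp hf (Equiv.mulRight b)).mp ⟨b, rfl⟩
  have hinv1 : f⁻¹ 1 = 1 := by
    apply f.injective
    rw [Equiv.Perm.apply_inv_self, h1]
  have e1 := congrFun (congrArg (fun (e : Equiv.Perm G) => (e : G → G)) hc) 1
  have e2 := congrFun (congrArg (fun (e : Equiv.Perm G) => (e : G → G)) hc) (f a)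
  simp only [Equiv.Perm.mul_apply, Equiv.coe_mulRight, one_mul, Equiv.Perm.inv_apply_self,
    hinv1] at e1 e2
  rw [e2, ← e1]

lemma conj_mem_GammaG (θ : Equiv.Perm G) (hθ : θ ∈ NHol G) (hθ1 : θ 1 = 1)
    (η : MulAut (G ⧸ commutator G)) (τ : MulAut (commutator G))
    (hη : ∀ x : G, η (x : G ⧸ commutator G) = ((θ x : G) : G ⧸ commutator G))
    (hτ : ∀ z : commutator G, ((τ z : commutator G) : G) = θ (z : G)) :
    ∀ g ∈ GammaG G, (η, τ) * g * (η, τ)⁻¹ ∈ GammaG G := by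
  have hηinv : ∀ x : G, η⁻¹ ((x : G ⧸ commutator G)) = ((θ⁻¹ x : G) : G ⧸ commutator G) := by
    intro x
    rw [MulAut.inv_def, MulEquiv.symm_apply_eq, hη, Equiv.Perm.apply_inv_self]
  have hτinv : ∀ z : commutator G, ((τ⁻¹ z : commutator G) : G) = θ⁻¹ (z : G) := by
    intro z
    have := hτ (τ⁻¹ z)
    simp only [MulAut.apply_inv_self] at this
    rw [Equiv.Perm.eq_inv_iff_eq, ← this]
  rintro ⟨η', τ'⟩ ⟨β, hβq, hβz⟩
  have hfHol : θ * MulAut.toPerm G β * θ⁻¹ ∈ Hol G :=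
    (Subgroup.mem_normalizer_iff.mp hθ (MulAut.toPerm G β)).mp (toPerm_mem_Hol β)
  set f : Equiv.Perm G := θ * MulAut.toPerm G β * θ⁻¹ with hfdef
  have hfapp : ∀ x : G, f x = θ (β (θ⁻¹ x)) := fun x => rfl
  have hf1 : f 1 = 1 := by
    have : θ⁻¹ (1 : G) = 1 := by
      apply θ.injective
      rw [Equiv.Perm.apply_inv_self, hθ1]
    rw [hfapp, this, map_one, hθ1]
  have hmul : ∀ a b : G, f (a * b) = f a * f b := fun a b => hol_fix_one_mul hfHol hf1 a b
  refine ⟨MulEquiv.mk f hmul, fun x => ?_, fun z => ?_⟩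
  · show (η * η' * η⁻¹) (x : G ⧸ commutator G) = _
    rw [MulAut.mul_apply, MulAut.mul_apply, hηinv, hβq, hη]
    rfl
  · show ((τ * τ' * τ⁻¹) z : G) = _
    rw [MulAut.mul_apply, MulAut.mul_apply, hτ, hβz, hτinv]
    rfl

end Aux

/-- Proposition: for `θ ∈ NHol(G)` with `1^θ = 1`, the pair of automorphisms of `G/G'` and `G'`
induced by restriction of `θ` lies in the normalizer of `Γ(G)`. -/
theorem res_mem_normalizer_Gamma
    (p : ℕ) (hp : p.Prime) (hodd : Odd p)
    (G : Type*) [Group G] [Finite G] (hpG : IsPGroup p G)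
    (hcomm : commutator G = Subgroup.center G) (hnontriv : commutator G ≠ ⊥)
    (θ : Equiv.Perm G) (hθ : θ ∈ NHol G) (hθ1 : θ 1 = 1)
    (η : MulAut (G ⧸ commutator G)) (τ : MulAut (commutator G))
    (hη : ∀ x : G, η (x : G ⧸ commutator G) = ((θ x : G) : G ⧸ commutator G))
    (hτ : ∀ z : commutator G, ((τ z : commutator G) : G) = θ (z : G)) :
    (η, τ) ∈ Subgroup.normalizer
      (GammaG G : Set (MulAut (G ⧸ commutator G) × MulAut (commutator G))) := by
  have hηinv : ∀ x : G, η⁻¹ ((x : G ⧸ commutator G)) = ((θ⁻¹ x : G) : G ⧸ commutator G) := by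
    intro x
    rw [MulAut.inv_def, MulEquiv.symm_apply_eq, hη, Equiv.Perm.apply_inv_self]
  have hτinv : ∀ z : commutator G, ((τ⁻¹ z : commutator G) : G) = θ⁻¹ (z : G) := by
    intro z
    have := hτ (τ⁻¹ z)
    simp only [MulAut.apply_inv_self] at this
    rw [Equiv.Perm.eq_inv_iff_eq, ← this]
  have hθinv1 : θ⁻¹ (1 : G) = 1 := by
    apply θ.injective
    rw [Equiv.Perm.apply_inv_self, hθ1]
  rw [Subgroup.mem_normalizer_iff]
  intro g
  constructor
  · exact fun hg => conj_mem_GammaG θ hθ hθ1 η τ hη hτ g hg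
  · intro hg
    have := conj_mem_GammaG θ⁻¹ (inv_mem hθ) hθinv1 η⁻¹ τ⁻¹ hηinv hτinv _ hg
    have heq : (η⁻¹, τ⁻¹) * ((η, τ) * g * (η, τ)⁻¹) * (η⁻¹, τ⁻¹)⁻¹ = g := by
      have h1 : (η⁻¹, τ⁻¹) = (η, τ)⁻¹ := rfl
      rw [h1]; group
    rwa [heq] at this
end

section
/- Assume the Assumption holds. Let θ1, θ2 ∈ NHol(G) with 1^{θ2} = 1, let Δ1, Δ2, Δ3 ∈ B satisfy θ1⁻¹ρ(G)θ1 = N_{Δ1}, θ2⁻¹ρ(G)θ2 = N_{Δ2} and (θ1θ2)⁻¹ρ(G)(θ1θ2) = N_{Δ3}, and let η ∈ Aut(G/G') and τ ∈ Aut(G') be the automorphisms induced by θ2, i.e., (xG')^η = x^{θ2}G' for all x ∈ G and z^τ = z^{θ2} for all z ∈ G'. Then Δ3(u, v) = Δ1(u^{η⁻¹}, v^{η⁻¹})^τ · Δ2(u, v) for all u, v ∈ G/G'. -/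
section BForms2
variable (G : Type*) [Group G]

/-- Membership in `B`: `Δ : G/G' × G/G' → G'` is bilinear and `Aut(G)`-equivariant,
i.e. `Δ(u^β̄, v^β̄) = Δ(u,v)^β` for all `β ∈ Aut(G)`. -/
def MemB (Δ : G ⧸ commutator G → G ⧸ commutator G → commutator G) : Prop :=
  (∀ u u' v : G ⧸ commutator G, Δ (u * u') v = Δ u v * Δ u' v) ∧
  (∀ u v v' : G ⧸ commutator G, Δ u (v * v') = Δ u v * Δ u v') ∧
  (∀ (β : MulAut G) (x y : G),
    ((Δ ((β x : G) : G ⧸ commutator G) ((β y : G) : G ⧸ commutator G) : commutator G) : G) =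
      β ((Δ (x : G ⧸ commutator G) (y : G ⧸ commutator G) : commutator G) : G))

end BForms2


section AutC

variable (G : Type*) [Group G]

lemma center_map_eq (β : MulAut G) :
    (Subgroup.center G).map β.toMonoidHom = Subgroup.center G :=
  Subgroup.characteristic_iff_map_eq.mp Subgroup.centerCharacteristic β

/-- The natural homomorphism `Aut(G) → Aut(G/Z(G))`. -/
def autToQuotCenter : MulAut G →* MulAut (G ⧸ Subgroup.center G) where
  toFun β := QuotientGroup.congr (Subgroup.center G) (Subgroup.center G) β (center_map_eq G β)
  map_one' := by
    ext q
    induction q using QuotientGroup.induction_on with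
    | _ x => rfl
  map_mul' β₁ β₂ := by
    ext q
    induction q using QuotientGroup.induction_on with
    | _ x => rfl

/-- `Aut_c(G)`: the kernel of the natural homomorphism `Aut(G) → Aut(G/Z(G))`;
the quotient `MulAut G ⧸ AutcKer G` is then `Aut^c(G)`. -/
def AutcKer : Subgroup (MulAut G) := (autToQuotCenter G).ker

instance : (AutcKer G).Normal := by unfold AutcKer; infer_instance


/-- The Assumption: there is no non-trivial `Aut^c(G)`-equivariant homomorphism
`G/G' → Aut^c(G)`. -/
def AssumptionHolds : Prop :=
  ∀ f : (G ⧸ commutator G) →* (MulAut G ⧸ AutcKer G),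
    (∀ (β : MulAut G) (x : G),
      f ((β x : G) : G ⧸ commutator G) =
        (QuotientGroup.mk β)⁻¹ * f (x : G ⧸ commutator G) * QuotientGroup.mk β) →
    ∀ v : G ⧸ commutator G, f v = 1

end AutC

section NDelta

variable (G : Type*) [Group G]

/-- The set of maps underlying `N_Δ = {γ_Δ(y)ρ(y) : y ∈ G}`, where
`x^{γ_Δ(y)} = x·Δ(xG', yG')`; with maps composed left to right,
`x^{γ_Δ(y)ρ(y)} = (x·Δ(xG', yG'))·y`. -/
def NDeltaSet (Δ : G ⧸ commutator G → G ⧸ commutator G → commutator G) : Set (G → G) :=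
  {f | ∃ y : G, f = fun x : G =>
    x * ((Δ (QuotientGroup.mk x) (QuotientGroup.mk y) : commutator G) : G) * y}

/-- The set of maps underlying `θ⁻¹ρ(G)θ` (maps composed left to right):
`x^{θ⁻¹ρ(y)θ} = θ(θ⁻¹(x)·y)`. -/
def conjRhoSet (θ : Equiv.Perm G) : Set (G → G) :=
  {f | ∃ y : G, f = fun x => θ (θ.symm x * y)}

end NDelta

section AuxLemmas

variable {G : Type*} [Group G]

lemma bilin_one_left {Q A : Type*} [Group Q] [Group A]
    (Δ : Q → Q → A) (h : ∀ u u' v, Δ (u * u') v = Δ u v * Δ u' v) (v : Q) :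
    Δ 1 v = 1 := by
  have h1 := h 1 1 v
  rw [one_mul] at h1
  exact left_eq_mul.mp h1

lemma conj_eq_aux (θ : Equiv.Perm G)
    (Δ : G ⧸ commutator G → G ⧸ commutator G → commutator G)
    (h : conjRhoSet G θ = NDeltaSet G Δ) (y : G) :
    ∃ y' : G, ∀ s : G,
      θ (s * y) = θ s *
        ((Δ (QuotientGroup.mk (θ s)) (QuotientGroup.mk y') : commutator G) : G) * y' := by
  have hmem : (fun x => θ (θ.symm x * y)) ∈ NDeltaSet G Δ := by
    rw [← h]; exact ⟨y, rfl⟩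
  obtain ⟨y', hy'⟩ := hmem
  refine ⟨y', fun s => ?_⟩
  have h2 := congrFun hy' (θ s)
  simpa using h2

lemma central_shuffle {A B T S w : G} (h : B * T = T * B) :
    A * B * (T * S * w) = A * T * (B * (S * w)) := by
  rw [mul_assoc T S w, mul_assoc A B, ← mul_assoc B T, h, mul_assoc T B, ← mul_assoc A T]

end AuxLemmas

/-- Proposition (multiplication rule): `Δ_{θ1θ2} = Δ_{θ1}^{res(θ2)} · Δ_{θ2}`. -/
theorem Delta_mul_rule
    (p : ℕ) (hp : p.Prime) (hodd : Odd p)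
    (G : Type*) [Group G] [Finite G] (hpG : IsPGroup p G)
    (hcomm : commutator G = Subgroup.center G) (hnontriv : commutator G ≠ ⊥)
    (hAss : AssumptionHolds G)
    (θ1 θ2 : Equiv.Perm G) (hθ1 : θ1 ∈ NHol G) (hθ2 : θ2 ∈ NHol G) (hθ21 : θ2 1 = 1)
    (Δ1 Δ2 Δ3 : G ⧸ commutator G → G ⧸ commutator G → commutator G)
    (hΔ1 : MemB G Δ1) (hΔ2 : MemB G Δ2) (hΔ3 : MemB G Δ3)
    (hc1 : conjRhoSet G θ1 = NDeltaSet G Δ1)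
    (hc2 : conjRhoSet G θ2 = NDeltaSet G Δ2)
    (hc3 : conjRhoSet G (θ1.trans θ2) = NDeltaSet G Δ3)
    (η : MulAut (G ⧸ commutator G)) (τ : MulAut (commutator G))
    (hη : ∀ x : G, η (x : G ⧸ commutator G) = ((θ2 x : G) : G ⧸ commutator G))
    (hτ : ∀ z : commutator G, ((τ z : commutator G) : G) = θ2 (z : G)) :
    ∀ u v : G ⧸ commutator G, Δ3 u v = τ (Δ1 (η⁻¹ u) (η⁻¹ v)) * Δ2 u v := by
  classical
  have hη' : ∀ x : G, η (QuotientGroup.mk x) = QuotientGroup.mk (θ2 x) := hη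
  have hτ' : ∀ z : commutator G, θ2 (z : G) = ((τ z : commutator G) : G) :=
    fun z => (hτ z).symm
  have hz : ∀ (z : commutator G) (g : G), g * (z : G) = (z : G) * g := by
    intro z g
    have hzc : (z : G) ∈ Subgroup.center G := hcomm ▸ z.2
    exact Subgroup.mem_center_iff.mp hzc g
  have hmkz : ∀ z : commutator G,
      (QuotientGroup.mk (z : G) : G ⧸ commutator G) = 1 :=
    fun z => (QuotientGroup.eq_one_iff _).mpr z.2
  have hΔ2one : ∀ v : G ⧸ commutator G, Δ2 1 v = 1 := bilin_one_left Δ2 hΔ2.1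
  -- multiplication rule for θ2
  have hA : ∀ a b : G, θ2 (a * b) = θ2 a *
      ((Δ2 (QuotientGroup.mk (θ2 a)) (QuotientGroup.mk (θ2 b)) : commutator G) : G) * θ2 b := by
    intro a b
    obtain ⟨y', h'⟩ := conj_eq_aux θ2 Δ2 hc2 b
    have h1 := h' 1
    rw [one_mul, hθ21] at h1
    rw [QuotientGroup.mk_one, hΔ2one, OneMemClass.coe_one, mul_one, one_mul] at h1
    rw [h', ← h1]
  -- θ2 on a central (commutator) element times anything
  have hB : ∀ (z : commutator G) (b : G),
      θ2 ((z : G) * b) = ((τ z : commutator G) : G) * θ2 b := by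
    intro z b
    rw [hA, hτ' z, hmkz (τ z), hΔ2one, OneMemClass.coe_one, mul_one]
  have hBmk : ∀ (z : commutator G) (b : G),
      (QuotientGroup.mk (θ2 ((z : G) * b)) : G ⧸ commutator G) = QuotientGroup.mk (θ2 b) := by
    intro z b
    rw [hB, QuotientGroup.mk_mul, hmkz, one_mul]
  intro u v
  obtain ⟨gs, hgs⟩ := QuotientGroup.mk_surjective (η⁻¹ u * QuotientGroup.mk (θ1 1))
  obtain ⟨gy, hgy⟩ := QuotientGroup.mk_surjective (QuotientGroup.mk (θ1 1) * η⁻¹ v)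
  obtain ⟨y₁, h1⟩ := conj_eq_aux θ1 Δ1 hc1 (θ1.symm gy)
  obtain ⟨y₃, h3⟩ := conj_eq_aux (θ1.trans θ2) Δ3 hc3 (θ1.symm gy)
  have hy1mk : (QuotientGroup.mk y₁ : G ⧸ commutator G) = η⁻¹ v := by
    have h := h1 1
    rw [one_mul, θ1.apply_symm_apply] at h
    have h2 : (QuotientGroup.mk gy : G ⧸ commutator G)
        = QuotientGroup.mk (θ1 1) * QuotientGroup.mk y₁ := by
      rw [h, QuotientGroup.mk_mul, QuotientGroup.mk_mul, hmkz, mul_one]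
    rw [hgy] at h2
    exact (mul_left_cancel h2).symm
  have hθ2y1mk : (QuotientGroup.mk (θ2 y₁) : G ⧸ commutator G) = v := by
    rw [← hη' y₁, hy1mk]
    simp
  have hy3mk : (QuotientGroup.mk y₃ : G ⧸ commutator G) = v := by
    have h := h3 1
    rw [one_mul] at h
    simp only [Equiv.trans_apply] at h
    rw [θ1.apply_symm_apply] at h
    have h2 : (QuotientGroup.mk (θ2 gy) : G ⧸ commutator G)
        = QuotientGroup.mk (θ2 (θ1 1)) * QuotientGroup.mk y₃ := by
      rw [h, QuotientGroup.mk_mul, QuotientGroup.mk_mul, hmkz, mul_one]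
    rw [← hη' gy, ← hη' (θ1 1), hgy, map_mul] at h2
    have h4 := mul_left_cancel h2
    rw [MulAut.apply_inv_self] at h4
    exact h4.symm
  have star : ∀ a : G,
      ((Δ3 (η (QuotientGroup.mk (θ1 a))) v : commutator G) : G) * y₃ =
      ((Δ2 (η (QuotientGroup.mk (θ1 a))) v : commutator G) : G) *
        (((τ (Δ1 (QuotientGroup.mk (θ1 a)) (η⁻¹ v)) : commutator G) : G) * θ2 y₁) := by
    intro a
    have hL := h3 a
    simp only [Equiv.trans_apply] at hL
    have hR : θ2 (θ1 (a * θ1.symm gy)) = θ2 (θ1 a) *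
        (((Δ2 (QuotientGroup.mk (θ2 (θ1 a))) (QuotientGroup.mk (θ2 y₁)) : commutator G) : G) *
          (((τ (Δ1 (QuotientGroup.mk (θ1 a)) (QuotientGroup.mk y₁)) : commutator G) : G)
            * θ2 y₁)) := by
      rw [h1 a, mul_assoc, hA (θ1 a), hB, QuotientGroup.mk_mul, hmkz, one_mul, mul_assoc]
    rw [hR] at hL
    rw [mul_assoc] at hL
    have hc := mul_left_cancel hL
    rw [← hη' (θ1 a), hy3mk, hθ2y1mk, hy1mk] at hc
    exact hc.symm
  have hS1 := star (θ1.symm gs)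
  have hS2 := star 1
  rw [θ1.apply_symm_apply, hgs, map_mul η (η⁻¹ u), MulAut.apply_inv_self,
    hΔ3.1, hΔ2.1, hΔ1.1, map_mul τ] at hS1
  push_cast at hS1
  -- names for readability in the final algebra
  rw [central_shuffle (hz (τ (Δ1 (η⁻¹ u) (η⁻¹ v))) _), ← hS2, mul_assoc] at hS1
  have hfinal := mul_right_cancel hS1
  have hcoe : ((Δ3 u v : commutator G) : G)
      = ((τ (Δ1 (η⁻¹ u) (η⁻¹ v)) * Δ2 u v : commutator G) : G) := by
    push_cast
    rw [hfinal, hz]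
  exact Subtype.ext hcoe
end

section
/- Assume the Assumption holds. Let θ ∈ NHol(G) with 1^θ = 1, let Δ ∈ B satisfy θ⁻¹ρ(G)θ = N_Δ, and let η ∈ Aut(G/G') and τ ∈ Aut(G') be the automorphisms induced by θ, i.e., (xG')^η = x^θ G' for all x ∈ G and z^τ = z^θ for all z ∈ G'. Then Δ is symmetric (Δ(u, v) = Δ(v, u) for all u, v ∈ G/G') if and only if (η, τ) ∈ Γ(G). -/
lemma central_rearrange {G : Type*} [Group G] (a b B P Q : G)
    (hP : ∀ g : G, P * g = g * P) :
    a * b * B * (P * Q * B)⁻¹ = a * P⁻¹ * (b * Q⁻¹) := by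
  have hP' : ∀ g : G, P⁻¹ * g = g * P⁻¹ := fun g =>
    Commute.eq (Commute.inv_left (show Commute P g from hP g))
  calc a * b * B * (P * Q * B)⁻¹ = a * b * (Q⁻¹ * P⁻¹) := by group
    _ = a * (P⁻¹ * (b * Q⁻¹)) := by rw [hP' (b * Q⁻¹)]; group
    _ = a * P⁻¹ * (b * Q⁻¹) := (mul_assoc _ _ _).symm

lemma aux_E {G : Type*} [Group G] (bx by' tx ty d : G)
    (hc : ∀ g : G, (bx⁻¹ * tx) * g = g * (bx⁻¹ * tx)) :
    (bx * by')⁻¹ * (tx * ty * d) = (bx⁻¹ * tx) * (by'⁻¹ * ty) * d := by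
  calc (bx * by')⁻¹ * (tx * ty * d) = by'⁻¹ * ((bx⁻¹ * tx) * (ty * d)) := by group
    _ = by'⁻¹ * ((ty * d) * (bx⁻¹ * tx)) := by rw [hc]
    _ = (by'⁻¹ * ty) * d * (bx⁻¹ * tx) := by group
    _ = (bx⁻¹ * tx) * ((by'⁻¹ * ty) * d) := (hc _).symm
    _ = (bx⁻¹ * tx) * (by'⁻¹ * ty) * d := (mul_assoc _ _ _).symm


lemma aux_W {H : Type*} [Group H] (A B C : H) (m : ℕ)
    (hcomm : ∀ z w : H, z * w = w * z) (hBB : B ^ m * B ^ m = B) :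
    ((A * B) * (B * C)) ^ m = A ^ m * C ^ m * B := by
  have c : ∀ z w : H, Commute z w := hcomm
  calc ((A * B) * (B * C)) ^ m = (A * B) ^ m * (B * C) ^ m := (c _ _).mul_pow m
    _ = A ^ m * B ^ m * (B ^ m * C ^ m) := by rw [(c A B).mul_pow, (c B C).mul_pow]
    _ = A ^ m * (B ^ m * (B ^ m * C ^ m)) := mul_assoc _ _ _
    _ = A ^ m * ((B ^ m * B ^ m) * C ^ m) := by rw [← mul_assoc (B ^ m)]
    _ = A ^ m * (B * C ^ m) := by rw [hBB]
    _ = A ^ m * (C ^ m * B) := by rw [hcomm B (C ^ m)]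
    _ = A ^ m * C ^ m * B := (mul_assoc _ _ _).symm

/-- Proposition (kernel description): under the Assumption, for `θ ∈ NHol(G)` fixing `1`
with `θ⁻¹ρ(G)θ = N_Δ`, the form `Δ` is symmetric if and only if the pair of automorphisms
induced by `θ` on `G/G'` and `G'` lies in `Γ(G)`. -/
theorem symmetric_iff_res_mem_Gamma
    (p : ℕ) (hp : p.Prime) (hodd : Odd p)
    (G : Type*) [Group G] [Finite G] (hpG : IsPGroup p G)
    (hcomm : commutator G = Subgroup.center G) (hnontriv : commutator G ≠ ⊥)
    (hAss : AssumptionHolds G)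
    (θ : Equiv.Perm G) (hθ : θ ∈ NHol G) (hθ1 : θ 1 = 1)
    (Δ : G ⧸ commutator G → G ⧸ commutator G → commutator G)
    (hΔ : MemB G Δ) (hc : conjRhoSet G θ = NDeltaSet G Δ)
    (η : MulAut (G ⧸ commutator G)) (τ : MulAut (commutator G))
    (hη : ∀ x : G, η (x : G ⧸ commutator G) = ((θ x : G) : G ⧸ commutator G))
    (hτ : ∀ z : commutator G, ((τ z : commutator G) : G) = θ (z : G)) :
    (∀ u v : G ⧸ commutator G, Δ u v = Δ v u) ↔ (η, τ) ∈ GammaG G := by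
    classical
  have hZ : ∀ z : G, z ∈ commutator G → ∀ a : G, z * a = a * z := by
    intro z hz a
    rw [hcomm] at hz
    exact (Subgroup.mem_center_iff.mp hz a).symm
  have hΔ1 : ∀ v : G ⧸ commutator G, Δ 1 v = 1 := by
    intro v
    have h := hΔ.1 1 1 v
    rw [one_mul] at h
    exact left_eq_mul.mp h
  have hθs1 : θ.symm 1 = 1 := by rw [Equiv.symm_apply_eq]; exact hθ1.symm
  have hmk : ∀ (g h : G), h ∈ commutator G →
      (QuotientGroup.mk (g * h) : G ⧸ commutator G) = QuotientGroup.mk g := by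
    intro g h hh
    rw [QuotientGroup.mk_mul, (QuotientGroup.eq_one_iff h).mpr hh, mul_one]
  have key : ∀ x y : G, θ (θ.symm x * y)
      = x * ((Δ (QuotientGroup.mk x) (QuotientGroup.mk (θ y)) : commutator G) : G) * θ y := by
    intro x y
    have hmem : (fun x => θ (θ.symm x * y)) ∈ NDeltaSet G Δ := by
      rw [← hc]; exact ⟨y, rfl⟩
    obtain ⟨y', hy'⟩ := hmem
    have hmk1 : (QuotientGroup.mk (1 : G) : G ⧸ commutator G) = 1 :=
      (QuotientGroup.eq_one_iff 1).mpr (one_mem _)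
    have h0 := congrFun hy' 1
    simp only [hθs1, one_mul, hmk1, hΔ1] at h0
    simp only [OneMemClass.coe_one, one_mul] at h0
    subst h0
    exact congrFun hy' x
  have keyθ : ∀ x y : G, θ (x * y) = θ x * θ y *
      ((Δ (QuotientGroup.mk (θ x)) (QuotientGroup.mk (θ y)) : commutator G) : G) := by
    intro x y
    have h := key (θ x) y
    rw [Equiv.symm_apply_apply] at h
    rw [h, mul_assoc, hZ _ (Δ _ _).2 (θ y), ← mul_assoc]
  constructor
  · -- symmetric → (η, τ) ∈ Γ(G)
    intro hsym
    haveI : Fact p.Prime := ⟨hp⟩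
    obtain ⟨k, hk⟩ := IsPGroup.iff_card.mp (hpG.to_subgroup (commutator G))
    obtain ⟨j, hj⟩ : Odd (Nat.card (commutator G)) := hk.symm ▸ hodd.pow
    set m : ℕ := j + 1 with hm
    have h2m : m + m = Nat.card (commutator G) + 1 := by omega
    have hpow : ∀ z : commutator G, z ^ Nat.card (commutator G) = 1 := fun z =>
      pow_card_eq_one'
    have hBB : ∀ u v : G ⧸ commutator G, (Δ u v) ^ m * (Δ u v) ^ m = Δ u v := by
      intro u v
      rw [← pow_add, h2m, pow_succ, hpow, one_mul]
    have hcommSub : ∀ z w : commutator G, z * w = w * z := fun z w =>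
      Subtype.ext (hZ _ z.2 _)
    have hWsub : ∀ u v : G ⧸ commutator G,
        (Δ (u * v) (u * v)) ^ m = (Δ u u) ^ m * (Δ v v) ^ m * Δ u v := by
      intro u v
      have e1 : Δ (u * v) (u * v) = (Δ u u * Δ u v) * (Δ u v * Δ v v) := by
        rw [hΔ.1, hΔ.2.1, hΔ.2.1, hsym v u]
      rw [e1]
      exact aux_W _ _ _ m hcommSub (hBB u v)
    have hW : ∀ u v : G ⧸ commutator G,
        (((Δ (u * v) (u * v)) ^ m : commutator G) : G)
          = (((Δ u u) ^ m : commutator G) : G) * (((Δ v v) ^ m : commutator G) : G)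
            * ((Δ u v : commutator G) : G) := by
      intro u v
      rw [hWsub u v, Subgroup.coe_mul, Subgroup.coe_mul]
    -- the corrected map
    set F : G → G := fun g => θ g *
      ((((Δ (QuotientGroup.mk (θ g)) (QuotientGroup.mk (θ g))) ^ m : commutator G) : G))⁻¹
      with hF
    have hmkF : ∀ g : G, (QuotientGroup.mk (F g) : G ⧸ commutator G) = QuotientGroup.mk (θ g) := by
      intro g
      rw [hF]
      exact hmk _ _ (inv_mem ((Δ _ _ ^ m)).2)
    have hFmul : ∀ x y : G, F (x * y) = F x * F y := by
      intro x y
      have hmkxy : (QuotientGroup.mk (θ (x * y)) : G ⧸ commutator G)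
          = QuotientGroup.mk (θ x) * QuotientGroup.mk (θ y) := by
        rw [keyθ, hmk _ _ (Δ _ _).2, QuotientGroup.mk_mul]
      simp only [hF]
      rw [hmkxy, keyθ x y, hW]
      exact central_rearrange _ _ _ _ _ (fun g => hZ _ ((Δ _ _ ^ m)).2 g)
    have hFinj : Function.Injective F := by
      intro g g' hgg
      have h1 : (QuotientGroup.mk (θ g) : G ⧸ commutator G) = QuotientGroup.mk (θ g') := by
        rw [← hmkF, ← hmkF, hgg]
      have h2 : θ g = θ g' := by
        have := hgg
        simp only [hF] at this
        rw [h1] at this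
        exact mul_right_cancel this
      exact θ.injective h2
    let Fm : G →* G := MonoidHom.mk' F hFmul
    have hFmbij : Function.Bijective Fm := Finite.injective_iff_bijective.mp hFinj
    refine ⟨MulEquiv.ofBijective Fm hFmbij, fun x => ?_, fun z => ?_⟩
    · show η (QuotientGroup.mk x) = QuotientGroup.mk (F x)
      rw [hmkF]
      exact hη x
    · show ((τ z : commutator G) : G) = F (z : G)
      have h1 : (QuotientGroup.mk (θ (z : G)) : G ⧸ commutator G) = 1 := by
        rw [← hη, (QuotientGroup.eq_one_iff _).mpr z.2, map_one]
      rw [hF]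
      show ((τ z : commutator G) : G) = θ (z : G) * _
      rw [h1, hΔ1, one_pow]
      simp only [OneMemClass.coe_one, inv_one, mul_one]
      exact hτ z
  · -- (η, τ) ∈ Γ(G) → symmetric
    intro hmem u v
    obtain ⟨β, hβ1, hβ2⟩ := hmem
    have hβ1' : ∀ x : G, η (QuotientGroup.mk x) = QuotientGroup.mk (β x) := hβ1
    have hβ2' : ∀ z : commutator G, ((τ z : commutator G) : G) = β (z : G) := hβ2
    have hEmem : ∀ x : G, (β x)⁻¹ * θ x ∈ commutator G := by
      intro x
      have h : (QuotientGroup.mk (β x) : G ⧸ commutator G) = QuotientGroup.mk (θ x) :=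
        (hβ1' x).symm.trans (hη x)
      exact QuotientGroup.eq.mp h
    have hE : ∀ x y : G, (β (x * y))⁻¹ * θ (x * y)
        = ((β x)⁻¹ * θ x) * ((β y)⁻¹ * θ y)
          * ((Δ (QuotientGroup.mk (θ x)) (QuotientGroup.mk (θ y)) : commutator G) : G) := by
      intro x y
      rw [map_mul, keyθ]
      exact aux_E _ _ _ _ _ (fun g => hZ _ (hEmem x) g)
    open scoped commutatorElement in
    have hD : ∀ x y : G, Δ (QuotientGroup.mk (θ x)) (QuotientGroup.mk (θ y))
        = Δ (QuotientGroup.mk (θ y)) (QuotientGroup.mk (θ x)) := by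
      intro x y
      have hcm : ⁅x, y⁆ ∈ commutator G := by
        rw [commutator_def]
        exact Subgroup.commutator_mem_commutator (Subgroup.mem_top x) (Subgroup.mem_top y)
      have hxy : x * y = ⁅x, y⁆ * (y * x) := by rw [commutatorElement_def]; group
      have h3 := hE ⁅x, y⁆ (y * x)
      rw [← hxy] at h3
      have hbc : θ ⁅x, y⁆ = β ⁅x, y⁆ :=
        (hτ ⟨⁅x, y⁆, hcm⟩).symm.trans (hβ2' ⟨⁅x, y⁆, hcm⟩)
      have hβcomm : (β ⁅x, y⁆)⁻¹ * θ ⁅x, y⁆ = 1 := by rw [hbc, inv_mul_cancel]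
      have hmkc : (QuotientGroup.mk (θ ⁅x, y⁆) : G ⧸ commutator G) = 1 := by
        rw [← hη, (QuotientGroup.eq_one_iff _).mpr hcm, map_one]
      rw [hβcomm, one_mul, hmkc, hΔ1] at h3
      simp only [OneMemClass.coe_one, mul_one] at h3
      have heq := (hE x y).symm.trans (h3.trans (hE y x))
      rw [hZ _ (hEmem y) ((β x)⁻¹ * θ x)] at heq
      exact Subtype.coe_injective (mul_left_cancel heq)
    obtain ⟨g1, hg1⟩ := QuotientGroup.mk_surjective u
    obtain ⟨g2, hg2⟩ := QuotientGroup.mk_surjective v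
    have h := hD (θ.symm g1) (θ.symm g2)
    rw [Equiv.apply_symm_apply, Equiv.apply_symm_apply, hg1, hg2] at h
    exact h
end
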